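/- Let C₂(R)(s,a,s') = R(s,a,s') + E[γ R(s',A,S₁) − R(s,A,S₂) − γ R(S₃,A,S₄) + γ² R(S₁,A,k₁) − γ R(S₂,A,k₂) + γ R(S₃,A,k₃) − γ² R(S₄,A,k₄)]. For a potentially shaped reward R' = R + γφ(s') − φ(s), C₂(R')(s,a,s') = C₂(R)(s,a,s') + E[γ³φ(k₁) − γ³φ(k₄) + γ²φ(k₃) − γ²φ(k₂)]. -/
import Mathlib


/-- Applying the canonicalization `C₂` to a potentially shaped reward leaves
the residual shaping `E[γ³φ(k₁) − γ³φ(k₄) + γ²φ(k₃) − γ²φ(k₂)]`. -/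
theorem stmt4 {St Ac Ω : Type*} [Fintype Ω]
    (R : St → Ac → St → ℝ) (φ : St → ℝ) (γ : ℝ) (hγ0 : 0 ≤ γ) (hγ1 : γ ≤ 1)
    (p : Ω → ℝ) (hp0 : ∀ ω, 0 ≤ p ω) (hp1 : ∑ ω, p ω = 1)
    (Av : Ω → Ac) (S1 S2 S3 S4 k1 k2 k3 k4 : Ω → St) (s : St) (a : Ac) (s' : St) :
    let E := fun (f : Ω → ℝ) => ∑ ω, p ω * f ω
    let C2 := fun (Q : St → Ac → St → ℝ) =>
      Q s a s' + E (fun ω =>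
        γ * Q s' (Av ω) (S1 ω) - Q s (Av ω) (S2 ω) - γ * Q (S3 ω) (Av ω) (S4 ω)
        + γ ^ 2 * Q (S1 ω) (Av ω) (k1 ω) - γ * Q (S2 ω) (Av ω) (k2 ω)
        + γ * Q (S3 ω) (Av ω) (k3 ω) - γ ^ 2 * Q (S4 ω) (Av ω) (k4 ω))
    C2 (fun u b w => R u b w + γ * φ w - φ u) =
      C2 R + E (fun ω =>
        γ ^ 3 * φ (k1 ω) - γ ^ 3 * φ (k4 ω) + γ ^ 2 * φ (k3 ω) - γ ^ 2 * φ (k2 ω)) := by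
  intro E C2
  simp only [E, C2]
  have key : ∀ ω : Ω,
      p ω * (γ * (R s' (Av ω) (S1 ω) + γ * φ (S1 ω) - φ s')
        - (R s (Av ω) (S2 ω) + γ * φ (S2 ω) - φ s)
        - γ * (R (S3 ω) (Av ω) (S4 ω) + γ * φ (S4 ω) - φ (S3 ω))
        + γ ^ 2 * (R (S1 ω) (Av ω) (k1 ω) + γ * φ (k1 ω) - φ (S1 ω))
        - γ * (R (S2 ω) (Av ω) (k2 ω) + γ * φ (k2 ω) - φ (S2 ω))
        + γ * (R (S3 ω) (Av ω) (k3 ω) + γ * φ (k3 ω) - φ (S3 ω))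
        - γ ^ 2 * (R (S4 ω) (Av ω) (k4 ω) + γ * φ (k4 ω) - φ (S4 ω)))
      = p ω * (γ * R s' (Av ω) (S1 ω) - R s (Av ω) (S2 ω)
          - γ * R (S3 ω) (Av ω) (S4 ω)
          + γ ^ 2 * R (S1 ω) (Av ω) (k1 ω) - γ * R (S2 ω) (Av ω) (k2 ω)
          + γ * R (S3 ω) (Av ω) (k3 ω) - γ ^ 2 * R (S4 ω) (Av ω) (k4 ω))
        + p ω * (γ ^ 3 * φ (k1 ω) - γ ^ 3 * φ (k4 ω) + γ ^ 2 * φ (k3 ω)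
            - γ ^ 2 * φ (k2 ω))
        + p ω * (φ s - γ * φ s') := by
    intro ω; ring
  rw [Finset.sum_congr rfl (fun ω _ => key ω)]
  rw [Finset.sum_add_distrib, Finset.sum_add_distrib, ← Finset.sum_mul, hp1]
  ring
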